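/- Let m be a positive integer, ε ∈ (0,1), λ > 0, and t₁ < t₂. Let ρ : [t₁, t₂] → ℝ be continuous with ρ(τ) ≥ ρ_min > 0 for all τ, and let 𝒳 : [t₁, t₂] → ℝ be continuously differentiable with 𝒳′(τ) ≥ 0 for all τ, 𝒳(t₁) = 4m−1 and 𝒳(t₂) = 4m+1. Then ∫_{t₁}^{t₂} (ρ(τ)·N(𝒳(τ))·𝒳′(τ) − 𝒳′(τ))·e^{λ(τ−t₂)} dτ ≥ 2ε·ρ_min·cos((π/2)·ε)·exp((4m−ε)²)·e^{λ(t₁−t₂)} − 2. -/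

import Mathlib

open Real

/-- The even smooth Nussbaum-type function `N(s) = exp(s²)·cos((π/2)·s)`. -/
noncomputable def Nfun (s : ℝ) : ℝ := Real.exp (s ^ 2) * Real.cos (Real.pi / 2 * s)

lemma Nfun_cos_eq (m : ℕ) (s : ℝ) :
    Real.cos (Real.pi / 2 * s) = Real.cos (Real.pi / 2 * (s - 4 * m)) := by
  have h : Real.pi / 2 * s = Real.pi / 2 * (s - 4 * m) + (m : ℤ) * (2 * Real.pi) := by
    push_cast; ring
  rw [h, Real.cos_add_int_mul_two_pi]

lemma Nfun_continuous : Continuous Nfun := by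
  unfold Nfun; fun_prop

lemma Nfun_nonneg (m : ℕ) (s : ℝ) (h1 : 4 * (m:ℝ) - 1 ≤ s) (h2 : s ≤ 4 * (m:ℝ) + 1) :
    0 ≤ Nfun s := by
  have hπ := Real.pi_pos
  have hc : 0 ≤ Real.cos (Real.pi / 2 * (s - 4 * m)) :=
    Real.cos_nonneg_of_mem_Icc ⟨by nlinarith, by nlinarith⟩
  have he := (Real.exp_pos (s ^ 2)).le
  unfold Nfun
  rw [Nfun_cos_eq m s]
  exact mul_nonneg he hc

lemma Nfun_lb (m : ℕ) (hm : 0 < m) (ε : ℝ) (hε0 : 0 < ε) (hε1 : ε < 1) (s : ℝ)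
    (h1 : 4 * (m:ℝ) - ε ≤ s) (h2 : s ≤ 4 * (m:ℝ) + ε) :
    Real.cos (Real.pi / 2 * ε) * Real.exp ((4 * (m:ℝ) - ε) ^ 2) ≤ Nfun s := by
  have hπ := Real.pi_pos
  have hm1 : (1:ℝ) ≤ (m:ℝ) := by exact_mod_cast hm
  have hbase : (0:ℝ) ≤ 4 * (m:ℝ) - ε := by nlinarith
  have hexp : Real.exp ((4 * (m:ℝ) - ε) ^ 2) ≤ Real.exp (s ^ 2) :=
    Real.exp_le_exp.mpr (by nlinarith)
  have habs : |Real.pi / 2 * (s - 4 * m)| ≤ Real.pi / 2 * ε := by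
    rw [abs_mul, abs_of_pos (by positivity : (0:ℝ) < Real.pi / 2)]
    have h3 : |s - 4 * (m:ℝ)| ≤ ε := abs_le.mpr ⟨by linarith, by linarith⟩
    nlinarith
  have hcos : Real.cos (Real.pi / 2 * ε) ≤ Real.cos (Real.pi / 2 * (s - 4 * m)) := by
    rw [← Real.cos_abs (Real.pi / 2 * (s - 4 * m))]
    exact Real.cos_le_cos_of_nonneg_of_le_pi (abs_nonneg _) (by nlinarith) habs
  have hcosε : 0 ≤ Real.cos (Real.pi / 2 * ε) :=
    Real.cos_nonneg_of_mem_Icc ⟨by nlinarith, by nlinarith⟩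
  unfold Nfun
  rw [Nfun_cos_eq m s, mul_comm (Real.exp (s ^ 2))]
  exact mul_le_mul hcos hexp (Real.exp_pos _).le (hcosε.trans hcos)

/-- Positive-excursion estimate (Case 2 of the paper's Nussbaum lemma): if `𝒳` increases
from `4m−1` to `4m+1` on `[t₁, t₂]`, then
`∫_{t₁}^{t₂} (ρ N(𝒳) 𝒳' − 𝒳') e^{λ(τ−t₂)} dτ ≥ 2ε ρmin cos((π/2)ε) e^{(4m−ε)²} e^{λ(t₁−t₂)} − 2`. -/
theorem positive_excursion_estimate (m : ℕ) (hm : 0 < m) (ε : ℝ) (hε : ε ∈ Set.Ioo (0:ℝ) 1)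
    (lam : ℝ) (hlam : 0 < lam) (t₁ t₂ : ℝ) (ht : t₁ < t₂) (ρ 𝒳 : ℝ → ℝ)
    (hρcont : ContinuousOn ρ (Set.Icc t₁ t₂)) (ρmin : ℝ) (hρmin : 0 < ρmin)
    (hρ : ∀ τ ∈ Set.Icc t₁ t₂, ρmin ≤ ρ τ)
    (h𝒳 : ContDiffOn ℝ 1 𝒳 (Set.Icc t₁ t₂))
    (h𝒳' : ∀ τ ∈ Set.Icc t₁ t₂, 0 ≤ deriv 𝒳 τ)
    (h𝒳₁ : 𝒳 t₁ = 4 * (m:ℝ) - 1) (h𝒳₂ : 𝒳 t₂ = 4 * (m:ℝ) + 1) :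
    2 * ε * ρmin * Real.cos (Real.pi / 2 * ε) * Real.exp ((4 * (m:ℝ) - ε) ^ 2) *
        Real.exp (lam * (t₁ - t₂)) - 2 ≤
      ∫ τ in t₁..t₂, (ρ τ * Nfun (𝒳 τ) * deriv 𝒳 τ - deriv 𝒳 τ) * Real.exp (lam * (τ - t₂)) := by
  obtain ⟨hε0, hε1⟩ := hε
  set φ : ℝ → ℝ := derivWithin 𝒳 (Set.Icc t₁ t₂) with hφdef
  have huIcc : Set.uIcc t₁ t₂ = Set.Icc t₁ t₂ := Set.uIcc_of_le ht.le
  have hφcont : ContinuousOn φ (Set.Icc t₁ t₂) :=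
    h𝒳.continuousOn_derivWithin (uniqueDiffOn_Icc ht) le_rfl
  have h𝒳cont : ContinuousOn 𝒳 (Set.Icc t₁ t₂) := h𝒳.continuousOn
  have hφeq : ∀ x ∈ Set.Ioo t₁ t₂, φ x = deriv 𝒳 x := fun x hx =>
    derivWithin_of_mem_nhds (Icc_mem_nhds hx.1 hx.2)
  have hder : ∀ x ∈ Set.Ioo t₁ t₂, HasDerivAt 𝒳 (φ x) x := by
    intro x hx
    have hmem : Set.Icc t₁ t₂ ∈ nhds x := Icc_mem_nhds hx.1 hx.2
    have hda := (h𝒳.differentiableOn one_ne_zero x (Set.Ioo_subset_Icc_self hx)).differentiableAt hmem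
    rw [hφeq x hx]; exact hda.hasDerivAt
  have hφnn : ∀ x ∈ Set.Ioo t₁ t₂, 0 ≤ φ x := fun x hx =>
    (hφeq x hx) ▸ h𝒳' x (Set.Ioo_subset_Icc_self hx)
  have hmono : MonotoneOn 𝒳 (Set.Icc t₁ t₂) := by
    apply monotoneOn_of_deriv_nonneg (convex_Icc _ _) h𝒳cont
    · rw [interior_Icc]
      intro x hx
      exact ((h𝒳.differentiableOn one_ne_zero x (Set.Ioo_subset_Icc_self hx)).differentiableAt
        (Icc_mem_nhds hx.1 hx.2)).differentiableWithinAt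
    · rw [interior_Icc]; exact fun x hx => h𝒳' x (Set.Ioo_subset_Icc_self hx)
  have h𝒳range : ∀ τ ∈ Set.Icc t₁ t₂, 4*(m:ℝ) - 1 ≤ 𝒳 τ ∧ 𝒳 τ ≤ 4*(m:ℝ)+1 := by
    intro τ hτ
    constructor
    · rw [← h𝒳₁]; exact hmono (Set.left_mem_Icc.mpr ht.le) hτ hτ.1
    · rw [← h𝒳₂]; exact hmono hτ (Set.right_mem_Icc.mpr ht.le) hτ.2
  have hff' : ∀ x ∈ Set.Ioo (min t₁ t₂) (max t₁ t₂),
      HasDerivWithinAt 𝒳 (φ x) (Set.Ioi x) x := by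
    rw [min_eq_left ht.le, max_eq_right ht.le]
    exact fun x hx => (hder x hx).hasDerivWithinAt
  have hNc : Continuous Nfun := Nfun_continuous
  -- change of variables
  have I1 : (∫ τ in t₁..t₂, φ τ * Nfun (𝒳 τ)) =
      ∫ s in (4*(m:ℝ)-1)..(4*(m:ℝ)+1), Nfun s := by
    have h := intervalIntegral.integral_comp_smul_deriv'' (f := 𝒳) (f' := φ) (g := Nfun)
      (huIcc ▸ h𝒳cont) hff' (huIcc ▸ hφcont) hNc.continuousOn
    simpa [h𝒳₁, h𝒳₂, Function.comp, smul_eq_mul] using h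
  have I2 : (∫ τ in t₁..t₂, φ τ) = 2 := by
    have h := intervalIntegral.integral_comp_smul_deriv'' (f := 𝒳) (f' := φ)
      (g := fun _ => (1:ℝ)) (huIcc ▸ h𝒳cont) hff' (huIcc ▸ hφcont) continuousOn_const
    simp only [Function.comp, smul_eq_mul, mul_one, h𝒳₁, h𝒳₂] at h
    rw [h]
    simp
    ring
  set c : ℝ := Real.cos (Real.pi/2*ε) * Real.exp ((4*(m:ℝ)-ε)^2) with hc
  have hJ : 2*ε*c ≤ ∫ s in (4*(m:ℝ)-1)..(4*(m:ℝ)+1), Nfun s := by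
    have hint : ∀ a b : ℝ, IntervalIntegrable Nfun MeasureTheory.volume a b := fun a b =>
      hNc.intervalIntegrable a b
    have hs1 : (∫ s in (4*(m:ℝ)-1)..(4*(m:ℝ)-ε), Nfun s) +
        (∫ s in (4*(m:ℝ)-ε)..(4*(m:ℝ)+1), Nfun s) =
        ∫ s in (4*(m:ℝ)-1)..(4*(m:ℝ)+1), Nfun s :=
      intervalIntegral.integral_add_adjacent_intervals (hint _ _) (hint _ _)
    have hs2 : (∫ s in (4*(m:ℝ)-ε)..(4*(m:ℝ)+ε), Nfun s) +
        (∫ s in (4*(m:ℝ)+ε)..(4*(m:ℝ)+1), Nfun s) =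
        ∫ s in (4*(m:ℝ)-ε)..(4*(m:ℝ)+1), Nfun s :=
      intervalIntegral.integral_add_adjacent_intervals (hint _ _) (hint _ _)
    have h1 : 0 ≤ ∫ s in (4*(m:ℝ)-1)..(4*(m:ℝ)-ε), Nfun s :=
      intervalIntegral.integral_nonneg (by linarith)
        (fun u hu => Nfun_nonneg m u (by linarith [hu.1]) (by linarith [hu.2]))
    have h3 : 0 ≤ ∫ s in (4*(m:ℝ)+ε)..(4*(m:ℝ)+1), Nfun s :=
      intervalIntegral.integral_nonneg (by linarith)
        (fun u hu => Nfun_nonneg m u (by linarith [hu.1]) (by linarith [hu.2]))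
    have h2 : 2*ε*c ≤ ∫ s in (4*(m:ℝ)-ε)..(4*(m:ℝ)+ε), Nfun s := by
      have hmono' := intervalIntegral.integral_mono_on
        (f := fun _ => c) (g := Nfun)
        (by linarith : (4*(m:ℝ)-ε) ≤ 4*(m:ℝ)+ε)
        intervalIntegrable_const (hint _ _)
        (fun s hs => Nfun_lb m hm ε hε0 hε1 s hs.1 hs.2)
      rwa [intervalIntegral.integral_const, smul_eq_mul,
        show (4*(m:ℝ)+ε - (4*(m:ℝ)-ε)) = 2*ε by ring] at hmono'
    linarith
  set E : ℝ := Real.exp (lam * (t₁ - t₂)) with hE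
  set g₁ : ℝ → ℝ := fun τ => (ρ τ * Nfun (𝒳 τ) * φ τ - φ τ) * Real.exp (lam * (τ - t₂))
    with hg₁
  set g₂ : ℝ → ℝ := fun τ => ρmin * E * (φ τ * Nfun (𝒳 τ)) - φ τ with hg₂
  have hg₁cont : ContinuousOn g₁ (Set.Icc t₁ t₂) := by
    apply ContinuousOn.mul
    · exact (((hρcont.mul (hNc.comp_continuousOn h𝒳cont)).mul hφcont).sub hφcont)
    · exact (Real.continuous_exp.comp (continuous_const.mul
        (continuous_id.sub continuous_const))).continuousOn
  have hg₂cont : ContinuousOn g₂ (Set.Icc t₁ t₂) :=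
    (continuousOn_const.mul (hφcont.mul (hNc.comp_continuousOn h𝒳cont))).sub hφcont
  have horig : (∫ τ in t₁..t₂,
      (ρ τ * Nfun (𝒳 τ) * deriv 𝒳 τ - deriv 𝒳 τ) * Real.exp (lam * (τ - t₂))) =
      ∫ τ in Set.Ioo t₁ t₂, g₁ τ := by
    rw [intervalIntegral.integral_of_le ht.le, MeasureTheory.integral_Ioc_eq_integral_Ioo]
    apply MeasureTheory.setIntegral_congr_fun measurableSet_Ioo
    intro x hx
    simp only [hg₁, ← hφeq x hx]
  have hIoo₂ : (∫ τ in t₁..t₂, g₂ τ) = ∫ τ in Set.Ioo t₁ t₂, g₂ τ := by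
    rw [intervalIntegral.integral_of_le ht.le, MeasureTheory.integral_Ioc_eq_integral_Ioo]
  have hmono2 : (∫ τ in Set.Ioo t₁ t₂, g₂ τ) ≤ ∫ τ in Set.Ioo t₁ t₂, g₁ τ := by
    apply MeasureTheory.setIntegral_mono_on
      ((hg₂cont.integrableOn_Icc).mono_set Set.Ioo_subset_Icc_self)
      ((hg₁cont.integrableOn_Icc).mono_set Set.Ioo_subset_Icc_self)
      measurableSet_Ioo
    intro τ hτ
    have hτI : τ ∈ Set.Icc t₁ t₂ := Set.Ioo_subset_Icc_self hτ
    have hn : 0 ≤ Nfun (𝒳 τ) := Nfun_nonneg m _ (h𝒳range τ hτI).1 (h𝒳range τ hτI).2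
    have hd : 0 ≤ φ τ := hφnn τ hτ
    have hp : ρmin ≤ ρ τ := hρ τ hτI
    have he1 : E ≤ Real.exp (lam*(τ-t₂)) := Real.exp_le_exp.mpr (by nlinarith [hτI.1])
    have he2 : Real.exp (lam*(τ-t₂)) ≤ 1 := by
      rw [Real.exp_le_one_iff]; nlinarith [hτI.2]
    have he0 : (0:ℝ) < E := Real.exp_pos _
    simp only [hg₁, hg₂]
    nlinarith [mul_le_mul (mul_le_mul hp he1 he0.le (hρmin.le.trans hp))
        (le_refl (Nfun (𝒳 τ) * φ τ)) (mul_nonneg hn hd)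
        (mul_nonneg (hρmin.le.trans hp) (Real.exp_pos (lam*(τ-t₂))).le),
      mul_le_of_le_one_right hd he2, mul_nonneg hn hd]
  have hI2' : (∫ τ in t₁..t₂, g₂ τ) =
      ρmin * E * (∫ s in (4*(m:ℝ)-1)..(4*(m:ℝ)+1), Nfun s) - 2 := by
    have hint1 : IntervalIntegrable (fun τ => ρmin*E*(φ τ * Nfun (𝒳 τ)))
        MeasureTheory.volume t₁ t₂ :=
      ContinuousOn.intervalIntegrable
        (by rw [huIcc]; exact continuousOn_const.mul (hφcont.mul (hNc.comp_continuousOn h𝒳cont)))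
    have hint2 : IntervalIntegrable φ MeasureTheory.volume t₁ t₂ :=
      ContinuousOn.intervalIntegrable (by rw [huIcc]; exact hφcont)
    rw [show (∫ τ in t₁..t₂, g₂ τ) = (∫ τ in t₁..t₂,
        (ρmin*E*(φ τ * Nfun (𝒳 τ)) - φ τ)) from rfl,
      intervalIntegral.integral_sub hint1 hint2, intervalIntegral.integral_const_mul, I2]
    congr 1
    rw [← I1]
  have hfinal : ρmin * E * (2*ε*c) ≤ ρmin * E * (∫ s in (4*(m:ℝ)-1)..(4*(m:ℝ)+1), Nfun s) := by
    apply mul_le_mul_of_nonneg_left hJ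
    positivity
  calc 2 * ε * ρmin * Real.cos (Real.pi / 2 * ε) * Real.exp ((4 * (m:ℝ) - ε) ^ 2) * E - 2
      = ρmin * E * (2*ε*c) - 2 := by rw [hc]; ring
    _ ≤ ρmin * E * (∫ s in (4*(m:ℝ)-1)..(4*(m:ℝ)+1), Nfun s) - 2 := by linarith
    _ = ∫ τ in t₁..t₂, g₂ τ := hI2'.symm
    _ = ∫ τ in Set.Ioo t₁ t₂, g₂ τ := hIoo₂
    _ ≤ ∫ τ in Set.Ioo t₁ t₂, g₁ τ := hmono2
    _ = _ := horig.symm
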